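/- Let R be a commutative semilocal zero-dimensional ring. If the total quotient ring of the polynomial ring R[X_1,...,X_n] is a perfect ring, then R satisfies the descending chain condition on principal ideals (i.e., R is perfect). -/

import Mathlib

universe u

open Finsupp Submodule

section Bass

variable {Q : Type u} [CommRing Q]

noncomputable def bassV (b : ℕ → Q) (n : ℕ) : ℕ →₀ Q :=
  Finsupp.single n 1 - Finsupp.single (n + 1) (b n)

noncomputable def bassG (b : ℕ → Q) : Submodule Q (ℕ →₀ Q) :=
  Submodule.span Q (Set.range (bassV b))

noncomputable def bassW (b : ℕ → Q) (k j : ℕ) : Q :=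
  if j ≤ k then ∏ t ∈ Finset.Ico j k, b t else 0

noncomputable def bassPsi (b : ℕ → Q) (k : ℕ) : (ℕ →₀ Q) →ₗ[Q] Q :=
  Finsupp.linearCombination Q (bassW b k)

lemma bassPsi_single (b : ℕ → Q) (k T : ℕ) (c : Q) :
    bassPsi b k (Finsupp.single T c) = c * bassW b k T := by
  simp [bassPsi, Finsupp.linearCombination_single, smul_eq_mul]

lemma single_bk (b : ℕ → Q) (m : ℕ) :
    Finsupp.single (m + 1) (b m) = b m • Finsupp.single (m + 1) (1 : Q) := by
  rw [Finsupp.smul_single, smul_eq_mul, mul_one]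

lemma bassPsi_v (b : ℕ → Q) (k n : ℕ) :
    bassPsi b k (bassV b n) = if n = k then 1 else 0 := by
  rw [bassV, map_sub, bassPsi_single, bassPsi_single, one_mul]
  rcases lt_trichotomy n k with h | h | h
  · have h1 : bassW b k n = b n * ∏ t ∈ Finset.Ico (n + 1) k, b t := by
      rw [bassW, if_pos h.le, Finset.prod_eq_prod_Ico_succ_bot h]
    have h2 : bassW b k (n + 1) = ∏ t ∈ Finset.Ico (n + 1) k, b t := by
      rw [bassW, if_pos (by omega : n + 1 ≤ k)]
    rw [h1, h2, if_neg h.ne]; ring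
  · subst h
    have h1 : bassW b n n = 1 := by simp [bassW]
    have h2 : bassW b n (n + 1) = 0 := by simp [bassW]
    simp [h1, h2]
  · have h1 : bassW b k n = 0 := by rw [bassW, if_neg (by omega)]
    have h2 : bassW b k (n + 1) = 0 := by rw [bassW, if_neg (by omega)]
    rw [h1, h2, if_neg (by omega)]; ring

lemma sum_ite_coeff (l : ℕ →₀ Q) (k : ℕ) :
    (l.sum fun n a => a * (if n = k then (1 : Q) else 0)) = l k := by
  classical
  rw [Finsupp.sum]
  simp only [mul_ite, mul_one, mul_zero]
  rw [Finset.sum_ite_eq' l.support k]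
  by_cases h : k ∈ l.support
  · rw [if_pos h]
  · rw [if_neg h, eq_comm]
    exact Finsupp.notMem_support_iff.mp h

lemma bassPsi_lincomb (b : ℕ → Q) (l : ℕ →₀ Q) (k : ℕ) :
    bassPsi b k (l.sum fun n a => a • bassV b n) = l k := by
  rw [map_finsuppSum]
  simp only [map_smul, bassPsi_v, smul_eq_mul]
  exact sum_ite_coeff l k

lemma bassV_linearIndependent (b : ℕ → Q) : LinearIndependent Q (bassV b) := by
  rw [linearIndependent_iff]
  intro l hl
  ext k
  have h := bassPsi_lincomb b l k
  rw [← Finsupp.linearCombination_apply, hl, map_zero] at h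
  exact h.symm

lemma bass_tele (b : ℕ → Q) (T : ℕ) :
    ∀ k, T ≤ k →
      Finsupp.single T (1 : Q) - (∏ t ∈ Finset.Ico T k, b t) • Finsupp.single k (1 : Q)
        ∈ bassG b := by
  refine Nat.le_induction ?_ ?_
  · simp
  · intro k hTk IH
    have key : Finsupp.single T (1 : Q)
          - (∏ t ∈ Finset.Ico T (k + 1), b t) • Finsupp.single (k + 1) (1 : Q)
        = (Finsupp.single T (1 : Q) - (∏ t ∈ Finset.Ico T k, b t) • Finsupp.single k (1 : Q))
          + (∏ t ∈ Finset.Ico T k, b t) • bassV b k := by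
      rw [bassV, Finset.prod_Ico_succ_top hTk, single_bk, smul_sub, smul_smul,
        sub_add_sub_cancel]
    rw [key]
    exact add_mem IH (Submodule.smul_mem _ _ (Submodule.subset_span ⟨k, rfl⟩))

lemma bass_raise (b : ℕ → Q) {ξ : ℕ →₀ Q} {T : ℕ} {q : Q}
    (h : ξ - q • Finsupp.single T (1 : Q) ∈ bassG b) {k : ℕ} (hTk : T ≤ k) :
    ξ - (q * ∏ t ∈ Finset.Ico T k, b t) • Finsupp.single k (1 : Q) ∈ bassG b := by
  have h2 := add_mem h (Submodule.smul_mem (bassG b) q (bass_tele b T k hTk))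
  have key : ξ - q • Finsupp.single T (1 : Q)
      + q • (Finsupp.single T (1 : Q)
          - (∏ t ∈ Finset.Ico T k, b t) • Finsupp.single k (1 : Q))
      = ξ - (q * ∏ t ∈ Finset.Ico T k, b t) • Finsupp.single k (1 : Q) := by
    rw [smul_sub, smul_smul, sub_add_sub_cancel]
  rwa [key] at h2

lemma bass_stage (b : ℕ → Q) (ξ : ℕ →₀ Q) :
    ∃ (T : ℕ) (q : Q), ξ - q • Finsupp.single T (1 : Q) ∈ bassG b := by
  classical
  refine Finsupp.induction ξ ⟨0, 0, by simpa using zero_mem (bassG b)⟩ ?_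
  rintro a cc f - - ⟨T1, q1, h1⟩
  refine ⟨max a T1, cc * ∏ t ∈ Finset.Ico a (max a T1), b t
    + q1 * ∏ t ∈ Finset.Ico T1 (max a T1), b t, ?_⟩
  have hA : (Finsupp.single a cc : ℕ →₀ Q)
      - (cc * ∏ t ∈ Finset.Ico a (max a T1), b t) • Finsupp.single (max a T1) (1 : Q)
      ∈ bassG b := by
    refine bass_raise b ?_ (le_max_left a T1)
    have : (Finsupp.single a cc : ℕ →₀ Q) - cc • Finsupp.single a (1 : Q) = 0 := by
      rw [Finsupp.smul_single, smul_eq_mul, mul_one, sub_self]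
    rw [this]
    exact zero_mem _
  have hB := bass_raise b h1 (le_max_right a T1)
  have h2 := add_mem hA hB
  have key : (Finsupp.single a cc : ℕ →₀ Q)
        - (cc * ∏ t ∈ Finset.Ico a (max a T1), b t) • Finsupp.single (max a T1) (1 : Q)
      + (f - (q1 * ∏ t ∈ Finset.Ico T1 (max a T1), b t) • Finsupp.single (max a T1) (1 : Q))
      = Finsupp.single a cc + f
      - (cc * ∏ t ∈ Finset.Ico a (max a T1), b t
          + q1 * ∏ t ∈ Finset.Ico T1 (max a T1), b t) • Finsupp.single (max a T1) (1 : Q) := by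
    rw [add_smul]
    abel
  rwa [key] at h2

theorem bass_vanish {Q : Type u} [CommRing Q]
    (hperf : ∀ (M : Type u) [AddCommGroup M] [Module Q M],
      Module.Flat Q M → Module.Projective Q M)
    (b : ℕ → Q) (hb : ∀ i, IsNilpotent (b i)) :
    ∃ k, ∏ i ∈ Finset.range k, b i = 0 := by
  classical
  set G := bassG b with hG
  have flat : Module.Flat Q ((ℕ →₀ Q) ⧸ G) := by
    refine Module.Flat.of_forall_isTrivialRelation ?_
    intro ι f x hrel
    choose ξ hξ using fun i => Submodule.Quotient.mk_surjective G (x i)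
    choose T q hTq using fun i => bass_stage b (ξ i)
    set T0 := (Finset.univ : Finset (Fin ι)).sup T with hT0
    set q' : Fin ι → Q := fun i => q i * ∏ t ∈ Finset.Ico (T i) T0, b t with hq'
    have hmk : ∀ i, x i
        = q' i • (Submodule.Quotient.mk (Finsupp.single T0 (1 : Q)) : (ℕ →₀ Q) ⧸ G) := by
      intro i
      rw [← hξ i, ← Submodule.Quotient.mk_smul, Submodule.Quotient.eq]
      exact bass_raise b (hTq i) (Finset.le_sup (Finset.mem_univ i))
    set s : Q := ∑ i, f i * q' i with hs
    have hsG : s • Finsupp.single T0 (1 : Q) ∈ G := by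
      rw [← Submodule.Quotient.mk_eq_zero G, Submodule.Quotient.mk_smul]
      calc s • (Submodule.Quotient.mk (Finsupp.single T0 (1 : Q)) : (ℕ →₀ Q) ⧸ G)
          = ∑ i, (f i * q' i) •
              (Submodule.Quotient.mk (Finsupp.single T0 (1 : Q)) : (ℕ →₀ Q) ⧸ G) := by
            rw [hs, Finset.sum_smul]
        _ = ∑ i, f i • x i := by
            refine Finset.sum_congr rfl fun i _ => ?_
            rw [hmk i, smul_smul]
        _ = 0 := hrel
    obtain ⟨l, hl⟩ := Finsupp.mem_span_range_iff_exists_finsupp.mp hsG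
    have hlk : ∀ k, T0 ≤ k → l k = s * ∏ t ∈ Finset.Ico T0 k, b t := by
      intro k hk
      have h1 := congrArg (bassPsi b k) hl
      rw [bassPsi_lincomb b l k, map_smul, bassPsi_single, one_mul, smul_eq_mul] at h1
      rw [h1, bassW, if_pos hk]
    set k0 := max T0 (l.support.sup id + 1) with hk0
    have hl0 : l k0 = 0 := by
      apply Finsupp.notMem_support_iff.mp
      intro hmem
      have := Finset.le_sup (f := id) hmem
      simp only [id] at this
      omega
    have hvan : s * ∏ t ∈ Finset.Ico T0 k0, b t = 0 := by
      rw [← hlk k0 (le_max_left _ _), hl0]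
    refine ⟨1, fun i _ => q' i * ∏ t ∈ Finset.Ico T0 k0, b t,
      fun _ => Submodule.Quotient.mk (Finsupp.single k0 (1 : Q)), ?_, ?_⟩
    · intro i
      have hsingle : (Submodule.Quotient.mk (Finsupp.single T0 (1 : Q)) : (ℕ →₀ Q) ⧸ G)
          = (∏ t ∈ Finset.Ico T0 k0, b t) •
              Submodule.Quotient.mk (Finsupp.single k0 (1 : Q)) := by
        rw [← Submodule.Quotient.mk_smul, Submodule.Quotient.eq]
        exact bass_tele b T0 k0 (le_max_left _ _)
      rw [Finset.univ_unique, Finset.sum_singleton, hmk i, hsingle, smul_smul]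
    · intro j
      show ∑ i : Fin ι, f i * (q' i * ∏ t ∈ Finset.Ico T0 k0, b t) = 0
      calc ∑ i : Fin ι, f i * (q' i * ∏ t ∈ Finset.Ico T0 k0, b t)
          = (∑ i : Fin ι, f i * q' i) * ∏ t ∈ Finset.Ico T0 k0, b t := by
            rw [Finset.sum_mul]
            exact Finset.sum_congr rfl fun i _ => (mul_assoc _ _ _).symm
        _ = 0 := hvan
  have proj := hperf _ flat
  obtain ⟨sec, hsec⟩ := Module.projective_lifting_property G.mkQ LinearMap.id G.mkQ_surjective
  have hτG : ∀ ξ : ℕ →₀ Q, ξ - sec (G.mkQ ξ) ∈ G := by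
    intro ξ
    rw [← Submodule.Quotient.mk_eq_zero G]
    have h1 : (Submodule.Quotient.mk (ξ - sec (G.mkQ ξ)) : (ℕ →₀ Q) ⧸ G)
        = G.mkQ ξ - G.mkQ (sec (G.mkQ ξ)) := by
      simp [Submodule.Quotient.mk_sub, Submodule.mkQ_apply]
    have h2 : G.mkQ (sec (G.mkQ ξ)) = G.mkQ ξ := by
      have := LinearMap.congr_fun hsec (G.mkQ ξ)
      simpa using this
    rw [h1, h2, sub_self]
  have hτv : ∀ m, sec (G.mkQ (bassV b m)) = 0 := by
    intro m
    have h1 : G.mkQ (bassV b m) = 0 := by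
      rw [Submodule.mkQ_apply, Submodule.Quotient.mk_eq_zero]
      exact Submodule.subset_span ⟨m, rfl⟩
    rw [h1, map_zero]
  set P : ℕ → G := fun m => ⟨Finsupp.single m 1 - sec (G.mkQ (Finsupp.single m 1)), hτG _⟩
    with hP
  have hsingle_eq : ∀ m, (Finsupp.single m (1 : Q) : ℕ →₀ Q)
      = bassV b m + b m • Finsupp.single (m + 1) (1 : Q) := by
    intro m
    rw [bassV, single_bk]
    abel
  have hrecP : ∀ m, (P m : ℕ →₀ Q) = bassV b m + b m • (P (m + 1) : ℕ →₀ Q) := by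
    intro m
    show Finsupp.single m 1 - sec (G.mkQ (Finsupp.single m 1))
      = bassV b m + b m • (Finsupp.single (m + 1) 1 - sec (G.mkQ (Finsupp.single (m + 1) 1)))
    have hτ : sec (G.mkQ (Finsupp.single m (1 : Q)))
        = b m • sec (G.mkQ (Finsupp.single (m + 1) (1 : Q))) := by
      conv_lhs => rw [hsingle_eq m]
      rw [map_add, map_add, hτv, zero_add, map_smul, map_smul]
    rw [hτ, smul_sub]
    conv_lhs => rw [hsingle_eq m]
    abel
  have hli := bassV_linearIndependent b
  set c : ℕ → (ℕ →₀ Q) := fun m => hli.repr (P m) with hc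
  have hcrec : ∀ m, c m = Finsupp.single m 1 + b m • c (m + 1) := by
    intro m
    have hPeq : P m = (⟨bassV b m, Submodule.subset_span ⟨m, rfl⟩⟩ : G) + b m • P (m + 1) := by
      apply Subtype.ext
      rw [Submodule.coe_add, SetLike.val_smul]
      exact hrecP m
    rw [hc]
    simp only [hPeq, map_add, map_smul]
    refine (map_add hli.repr _ _).trans (congrArg₂ (· + ·) ?_ (map_smul hli.repr _ _))
    exact hli.repr_eq_single m ⟨bassV b m, Submodule.subset_span ⟨m, rfl⟩⟩ rfl
  set k1 := (c 0).support.sup id + 1 with hk1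
  have hck1 : c 0 k1 = 0 := by
    apply Finsupp.notMem_support_iff.mp
    intro hmem
    have := Finset.le_sup (f := id) hmem
    simp only [id] at this
    omega
  have claim : ∀ j, j ≤ k1 → c 0 k1 = (∏ i ∈ Finset.range j, b i) * c j k1 := by
    intro j
    induction j with
    | zero => intro _; simp
    | succ j IH =>
        intro hj
        have hIH := IH (by omega)
        have hstep : c j k1 = b j * c (j + 1) k1 := by
          conv_lhs => rw [hcrec j]
          simp only [Finsupp.add_apply, Finsupp.smul_apply, smul_eq_mul]
          rw [Finsupp.single_eq_of_ne (by omega), zero_add]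
        rw [hIH, hstep, Finset.prod_range_succ]
        ring
  have hfinal := claim k1 le_rfl
  have hckk : c k1 k1 = 1 + b k1 * c (k1 + 1) k1 := by
    conv_lhs => rw [hcrec k1]
    simp only [Finsupp.add_apply, Finsupp.smul_apply, smul_eq_mul]
    rw [Finsupp.single_eq_same]
  rw [hck1, hckk] at hfinal
  have hu : IsUnit (1 + b k1 * c (k1 + 1) k1) :=
    ((Commute.all (b k1) (c (k1 + 1) k1)).isNilpotent_mul_right (hb k1)).isUnit_one_add
  exact ⟨k1, (hu.mul_left_eq_zero).mp hfinal.symm⟩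

end Bass

section Local

lemma span_eq_of_unit {A : Type*} [CommRing A] {u a : A} (hu : IsUnit u) :
    Ideal.span {u * a} = Ideal.span {a} := by
  apply le_antisymm
  · rw [Ideal.span_singleton_le_span_singleton]
    exact dvd_mul_left a u
  · rw [Ideal.span_singleton_le_span_singleton]
    obtain ⟨v, hv⟩ := hu.exists_left_inv
    exact ⟨v, by linear_combination (-a) * hv⟩

lemma local_stab {A : Type u} [CommRing A]
    (hnil : ∀ x : A, ¬IsUnit x → IsNilpotent x)
    (hT : ∀ g : ℕ → A, (∀ i, IsNilpotent (g i)) → ∃ k, ∏ i ∈ Finset.range k, g i = 0)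
    (a c : ℕ → A) (hac : ∀ m, a (m + 1) = c m * a m) :
    ∃ K, ∀ m, K ≤ m → Ideal.span {a m} = Ideal.span {a K} := by
  classical
  have hprod : ∀ i, ∀ m, i ≤ m → a m = (∏ t ∈ Finset.Ico i m, c t) * a i := by
    intro i
    refine Nat.le_induction ?_ ?_
    · simp
    · intro m him IH
      rw [hac m, IH, Finset.prod_Ico_succ_top him]
      ring
  by_cases hstab : ∃ K, ∀ i, K ≤ i → Ideal.span {a (i + 1)} = Ideal.span {a i}
  · obtain ⟨K, hK⟩ := hstab
    refine ⟨K, ?_⟩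
    refine Nat.le_induction ?_ ?_
    · rfl
    · intro m hm IH
      rw [hK m hm, IH]
  · exfalso
    push_neg at hstab
    set k : ℕ → ℕ := fun j => Nat.rec (hstab 0).choose
      (fun _ prev => (hstab (prev + 1)).choose) j with hk
    have hksucc : ∀ j, k (j + 1) = (hstab (k j + 1)).choose := fun j => rfl
    have hkmono : ∀ j, k j + 1 ≤ k (j + 1) := by
      intro j; rw [hksucc j]; exact (hstab (k j + 1)).choose_spec.1
    have hstrict : ∀ j, Ideal.span {a (k j + 1)} ≠ Ideal.span {a (k j)} := by
      intro j
      cases j with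
      | zero => exact (hstab 0).choose_spec.2
      | succ j => rw [hksucc j]; exact (hstab (k j + 1)).choose_spec.2
    set γ : ℕ → A := fun j => ∏ t ∈ Finset.Ico (k j + 1) (k (j + 1) + 1), c t with hγ
    have hγnil : ∀ j, IsNilpotent (γ j) := by
      intro j
      have hmem : k (j + 1) ∈ Finset.Ico (k j + 1) (k (j + 1) + 1) := by
        rw [Finset.mem_Ico]; exact ⟨hkmono j, by omega⟩
      have hnonunit : ¬IsUnit (c (k (j + 1))) := by
        intro hu
        exact hstrict (j + 1) (by rw [hac]; exact span_eq_of_unit hu)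
      show IsNilpotent (∏ t ∈ Finset.Ico (k j + 1) (k (j + 1) + 1), c t)
      rw [← Finset.prod_erase_mul _ c hmem]
      exact (Commute.all _ _).isNilpotent_mul_left (hnil _ hnonunit)
    obtain ⟨J, hJ⟩ := hT γ hγnil
    have htel : ∀ j, a (k j + 1) = (∏ t ∈ Finset.range j, γ t) * a (k 0 + 1) := by
      intro j
      induction j with
      | zero => simp
      | succ j IH =>
          have h1 : a (k (j + 1) + 1) = γ j * a (k j + 1) :=
            hprod (k j + 1) (k (j + 1) + 1) (by have := hkmono j; omega)
          rw [h1, IH, Finset.prod_range_succ]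
          ring
    have hzero : a (k J + 1) = 0 := by rw [htel J, hJ, zero_mul]
    have h1 : a (k (J + 1)) = 0 := by
      rw [hprod (k J + 1) (k (J + 1)) (hkmono J), hzero, mul_zero]
    have h2 : a (k (J + 1) + 1) = 0 := by rw [hac, h1, mul_zero]
    exact hstrict (J + 1) (by rw [h1, h2])

end Local

abbrev TotalQuotient (S : Type*) [CommRing S] := Localization (nonZeroDivisors S)

def IsSemilocal (S : Type*) [CommRing S] : Prop := {I : Ideal S | I.IsMaximal}.Finite

def IsZeroDimensional (S : Type*) [CommRing S] : Prop :=
  ∀ P : Ideal S, P.IsPrime → P.IsMaximal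

/-- A commutative ring is perfect if every flat module is projective. -/
def IsPerfectRing (R : Type u) [CommRing R] : Prop :=
  ∀ (M : Type u) [AddCommGroup M] [Module R M], Module.Flat R M → Module.Projective R M

/-- The descending chain condition on principal ideals. -/
def DCCPrincipal (R : Type*) [CommRing R] : Prop :=
  ∀ a : ℕ → R, (∀ m, Ideal.span {a (m + 1)} ≤ Ideal.span {a m}) →
    ∃ N, ∀ m, N ≤ m → Ideal.span {a m} = Ideal.span {a N}

theorem tnilpotent_of_perf {R : Type u} [CommRing R] (n : ℕ)
    (hperf : IsPerfectRing (TotalQuotient (MvPolynomial (Fin n) R)))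
    (y : ℕ → R) (hy : ∀ i, IsNilpotent (y i)) :
    ∃ k, ∏ i ∈ Finset.range k, y i = 0 := by
  set S := MvPolynomial (Fin n) R
  set Q := TotalQuotient S with hQ
  have hinj1 : Function.Injective (algebraMap S Q) :=
    IsLocalization.injective Q (le_refl (nonZeroDivisors S))
  have hinj2 : Function.Injective (MvPolynomial.C : R →+* S) := MvPolynomial.C_injective _ _
  set φ : R →+* Q := (algebraMap S Q).comp (MvPolynomial.C) with hφ
  have hinj : Function.Injective φ := hinj1.comp hinj2
  have hp : ∀ (M : Type u) [AddCommGroup M] [Module Q M],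
      Module.Flat Q M → Module.Projective Q M := hperf
  obtain ⟨k, hk⟩ := bass_vanish hp (fun i => φ (y i)) (fun i => (hy i).map φ)
  refine ⟨k, hinj ?_⟩
  rw [map_prod, map_zero]
  exact hk

theorem stmt_5 {R : Type u} [CommRing R] (n : ℕ)
    (hsemi : IsSemilocal R) (hzero : IsZeroDimensional R)
    (hperf : IsPerfectRing (TotalQuotient (MvPolynomial (Fin n) R))) :
    DCCPrincipal R := by
  classical
  intro a hchain
  have hTR := tnilpotent_of_perf n hperf
  have hdvd : ∀ m, a m ∣ a (m + 1) := fun m =>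
    Ideal.span_singleton_le_span_singleton.mp (hchain m)
  choose c hc using hdvd
  have hc' : ∀ m, a (m + 1) = c m * a m := fun m => by rw [hc m, mul_comm]
  -- stabilization after localizing at a maximal ideal
  have hloc2 : ∀ I : Ideal R, I.IsMaximal →
      ∃ K, ∀ m, K ≤ m → ∃ s r : R, s ∉ I ∧ s * a K = r * a m := by
    intro I hI
    haveI := hI.isPrime
    set A := Localization.AtPrime I with hA
    set φ := algebraMap R A with hφ
    have hprime_eq : ∀ P : Ideal A, P.IsPrime →
        ∀ x : A, x ∈ IsLocalRing.maximalIdeal A → x ∈ P := by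
      intro P hP x hx
      have hcomap : (P.comap φ).IsPrime := Ideal.IsPrime.comap φ
      have hle : P.comap φ ≤ I := by
        intro t ht
        by_contra htI
        have hu : IsUnit (φ t) := IsLocalization.map_units (M := I.primeCompl) A ⟨t, htI⟩
        exact hP.ne_top (Ideal.eq_top_of_isUnit_mem _ ht hu)
      have heq : P.comap φ = I := (hzero _ hcomap).eq_of_le hI.ne_top hle
      obtain ⟨⟨r, s⟩, hrs⟩ := IsLocalization.surj I.primeCompl x
      have hr : r ∈ I := by
        have h1 : φ r ∈ IsLocalRing.maximalIdeal A := by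
          rw [← hrs]; exact Ideal.mul_mem_right _ _ hx
        have h2 : r ∈ Ideal.comap φ (IsLocalRing.maximalIdeal A) := Ideal.mem_comap.mpr h1
        rwa [hφ, ← Ideal.under_def, Localization.AtPrime.under_maximalIdeal] at h2
      have hφr : φ r ∈ P := Ideal.mem_comap.mp (heq.symm ▸ hr)
      have hxs : x * φ s ∈ P := by rw [hrs]; exact hφr
      rcases hP.mem_or_mem hxs with h | h
      · exact h
      · exact absurd (Ideal.eq_top_of_isUnit_mem _ h (IsLocalization.map_units A s)) hP.ne_top
    have hnil : ∀ x : A, ¬IsUnit x → IsNilpotent x := by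
      intro x hx
      have hmem : x ∈ IsLocalRing.maximalIdeal A :=
        (IsLocalRing.mem_maximalIdeal x).mpr (mem_nonunits_iff.mpr hx)
      rw [← mem_nilradical, nilradical_eq_sInf, Ideal.mem_sInf]
      intro P hP
      exact hprime_eq P hP x hmem
    have hTA : ∀ g : ℕ → A, (∀ i, IsNilpotent (g i)) → ∃ k, ∏ i ∈ Finset.range k, g i = 0 := by
      intro g hg
      choose rs hrs using fun i => IsLocalization.surj I.primeCompl (g i)
      have hφr_nil : ∀ i, IsNilpotent (φ (rs i).1) := by
        intro i
        rw [← hrs i]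
        exact (Commute.all _ _).isNilpotent_mul_right (hg i)
      have hex : ∀ i, ∃ t : I.primeCompl, IsNilpotent ((t : R) * (rs i).1) := by
        intro i
        obtain ⟨ni, hni⟩ := hφr_nil i
        have h0 : φ ((rs i).1 ^ ni) = 0 := by rw [map_pow, hni]
        obtain ⟨t, ht⟩ := (IsLocalization.map_eq_zero_iff I.primeCompl A _).mp h0
        refine ⟨t, ⟨ni + 1, ?_⟩⟩
        have hexp : ((t : R) * (rs i).1) ^ (ni + 1)
            = ((t : R) ^ ni * (rs i).1) * ((t : R) * (rs i).1 ^ ni) := by ring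
        rw [hexp, ht, mul_zero]
      choose t ht using hex
      obtain ⟨k, hk⟩ := hTR (fun i => (t i : R) * (rs i).1) ht
      refine ⟨k, ?_⟩
      have hP1 : (∏ i ∈ Finset.range k, g i) * φ (∏ i ∈ Finset.range k, ((rs i).2 : R))
          = φ (∏ i ∈ Finset.range k, (rs i).1) := by
        rw [map_prod, map_prod, ← Finset.prod_mul_distrib]
        exact Finset.prod_congr rfl fun i _ => hrs i
      have hP2 : φ (∏ i ∈ Finset.range k, (rs i).1) = 0 := by
        rw [IsLocalization.map_eq_zero_iff I.primeCompl A]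
        refine ⟨⟨∏ i ∈ Finset.range k, (t i : R),
          Submonoid.prod_mem _ fun i _ => (t i).2⟩, ?_⟩
        show (∏ i ∈ Finset.range k, (t i : R)) * (∏ i ∈ Finset.range k, (rs i).1) = 0
        rw [← Finset.prod_mul_distrib]
        exact hk
      have hmem2 : (∏ i ∈ Finset.range k, ((rs i).2 : R)) ∈ I.primeCompl :=
        Submonoid.prod_mem _ fun i _ => (rs i).2.2
      have hu : IsUnit (φ (∏ i ∈ Finset.range k, ((rs i).2 : R))) :=
        IsLocalization.map_units (M := I.primeCompl) A
          ⟨∏ i ∈ Finset.range k, ((rs i).2 : R), hmem2⟩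
      exact (hu.mul_left_eq_zero).mp (hP1.trans hP2)
    obtain ⟨K, hK⟩ := local_stab hnil hTA (fun m => φ (a m)) (fun m => φ (c m))
      (fun m => by rw [← map_mul, ← hc' m])
    refine ⟨K, ?_⟩
    intro m hm
    have h1 : φ (a K) ∈ Ideal.span {φ (a m)} := by
      rw [hK m hm]
      exact Ideal.mem_span_singleton_self _
    obtain ⟨d, hd⟩ := Ideal.mem_span_singleton.mp h1
    obtain ⟨⟨r0, s0⟩, hrs0⟩ := IsLocalization.surj I.primeCompl d
    have h2 : φ (a K * s0) = φ (a m * r0) := by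
      rw [map_mul, map_mul, hd, mul_assoc, hrs0]
    obtain ⟨u, hu⟩ := (IsLocalization.eq_iff_exists I.primeCompl _).mp h2
    refine ⟨(u : R) * s0, (u : R) * r0, ?_, ?_⟩
    · exact Submonoid.mul_mem _ u.2 s0.2
    · calc (u : R) * s0 * a K = (u : R) * (a K * s0) := by ring
        _ = (u : R) * (a m * r0) := hu
        _ = (u : R) * r0 * a m := by ring
  have key : ∀ I : Ideal R, ∃ K, I.IsMaximal →
      ∀ m, K ≤ m → ∃ s r : R, s ∉ I ∧ s * a K = r * a m := by
    intro I
    by_cases hI : I.IsMaximal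
    · obtain ⟨K, hK⟩ := hloc2 I hI
      exact ⟨K, fun _ => hK⟩
    · exact ⟨0, fun h => absurd h hI⟩
  choose K hK using key
  set N := hsemi.toFinset.sup K with hN
  refine ⟨N, ?_⟩
  intro m hm
  have down : ∀ i, ∀ j, i ≤ j → Ideal.span {a j} ≤ Ideal.span {a i} := by
    intro i
    refine Nat.le_induction ?_ ?_
    · exact le_rfl
    · intro j hij IH
      exact le_trans (hchain j) IH
  refine le_antisymm (down N m hm) ?_
  rw [Ideal.span_singleton_le_span_singleton]
  by_contra hndvd
  set Jc : Ideal R := (Ideal.span {a m}).colon (Ideal.span {a N}) with hJc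
  have hJtop : Jc ≠ ⊤ := by
    intro htop
    have h1 : (1 : R) ∈ Jc := htop ▸ Submodule.mem_top
    have h2 := Submodule.mem_colon_span_singleton.mp h1
    rw [one_smul] at h2
    exact hndvd (Ideal.mem_span_singleton.mp h2)
  obtain ⟨I, hImax, hJI⟩ := Ideal.exists_le_maximal Jc hJtop
  have hIS : I ∈ hsemi.toFinset := (Set.Finite.mem_toFinset hsemi).mpr hImax
  have hKN : K I ≤ N := Finset.le_sup hIS
  obtain ⟨s2, r2, hs2, heq2⟩ := hK I hImax m (le_trans hKN hm)
  have hprodR : ∀ i, ∀ j, i ≤ j → ∃ w, a j = w * a i := by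
    intro i
    refine Nat.le_induction ?_ ?_
    · exact ⟨1, (one_mul _).symm⟩
    · rintro j hij ⟨w, hw⟩
      exact ⟨c j * w, by rw [hc' j, hw, mul_assoc]⟩
  obtain ⟨w, hw⟩ := hprodR (K I) N hKN
  have hs2J : s2 ∈ Jc := by
    apply Submodule.mem_colon_span_singleton.mpr
    refine Ideal.mem_span_singleton.mpr ⟨w * r2, ?_⟩
    rw [smul_eq_mul, hw]
    linear_combination w * heq2
  exact hs2 (hJI hs2J)
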